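/- Let η = diag(1,−1,−1,−1) be the 4×4 Minkowski matrix over ℂ, and let p = iso(1,3,ℂ) be the complexified Poincaré algebra, realized as the Lie subalgebra of gl(5,ℂ) of block matrices M(A,b) = [[A,b],[0,0]] with A a 4×4 complex matrix satisfying Aᵀη + ηA = 0 and b ∈ ℂ⁴. Let D be any finite-dimensional complex Lie module over p, with action ρ : p → End(D). Then for every translation element T = M(0,b) ∈ p, the endomorphism ρ(T) of D is nilpotent. (Lemma 4.1, part 1.) -/

import Mathlib

noncomputable section

/-- The Minkowski metric `η = diag(1,−1,−1,−1)` over `ℂ`. -/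
def etaC : Matrix (Fin 4) (Fin 4) ℂ := Matrix.diagonal ![1, -1, -1, -1]

/-- The block matrix `M(A,b) = [[A,b],[0,0]] ∈ gl(5,ℂ)`. -/
def MblkC (A : Matrix (Fin 4) (Fin 4) ℂ) (b : Fin 4 → ℂ) :
    Matrix (Fin 4 ⊕ Fin 1) (Fin 4 ⊕ Fin 1) ℂ :=
  Matrix.fromBlocks A (Matrix.of fun i _ => b i) 0 0

/-- The Lorentz condition `Aᵀη + ηA = 0` defining `iso(1,3,ℂ)` as the Lie algebra of
block matrices `M(A,b)` with `A` Lorentz. -/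
def IsLorentzC (A : Matrix (Fin 4) (Fin 4) ℂ) : Prop :=
  A.transpose * etaC + etaC * A = 0

/- ### Auxiliary material -/

section Aux

open Module

private lemma commShift {D : Type*} [AddCommGroup D] [Module ℂ D]
    (H X : Module.End ℂ D) (c : ℂ) (h : H * X - X * H = c • X) (μ : ℂ) (k : ℕ) :
    (H - (μ + c) • 1) ^ k * X = X * (H - μ • 1) ^ k := by
  have key : (H - (μ + c) • 1) * X = X * (H - μ • 1) := by
    have h' : H * X = c • X + X * H := by rw [← h]; abel
    rw [sub_mul, mul_sub, smul_mul_assoc, one_mul, mul_smul_comm, mul_one, h', add_smul]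
    abel
  induction k with
  | zero => simp
  | succ k ih => rw [pow_succ, pow_succ, mul_assoc, key, ← mul_assoc, ih, mul_assoc]

/-- If `[H, X] = c • X` with `c ≠ 0`, then `X` is nilpotent (finite dimension, over `ℂ`). -/
private lemma keyNilp {D : Type*} [AddCommGroup D] [Module ℂ D] [FiniteDimensional ℂ D]
    (H X : Module.End ℂ D) (c : ℂ) (hc : c ≠ 0) (h : H * X - X * H = c • X) :
    IsNilpotent X := by
  have step : ∀ (μ : ℂ) (v : D), v ∈ H.maxGenEigenspace μ →
      X v ∈ H.maxGenEigenspace (μ + c) := by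
    intro μ v hv
    rw [Module.End.mem_maxGenEigenspace] at hv ⊢
    obtain ⟨k, hk⟩ := hv
    refine ⟨k, ?_⟩
    have h2 := congrArg (fun f : Module.End ℂ D => f v) (commShift H X c h μ k)
    simpa [Module.End.mul_apply, hk] using h2
  have iter : ∀ (n : ℕ) (μ : ℂ) (v : D), v ∈ H.maxGenEigenspace μ →
      (X ^ n) v ∈ H.maxGenEigenspace (μ + n * c) := by
    intro n
    induction n with
    | zero => intro μ v hv; simpa using hv
    | succ n ih =>
      intro μ v hv
      have h2 := ih (μ + c) (X v) (step μ v hv)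
      have h3 : (X ^ (n + 1)) v = (X ^ n) (X v) := by
        rw [pow_succ, Module.End.mul_apply]
      rw [h3]
      convert h2 using 2
      push_cast
      ring
  have hbadfin : {n : ℕ | ∃ μ, H.HasEigenvalue μ ∧ H.HasEigenvalue (μ + n * c)}.Finite := by
    have hsub : {n : ℕ | ∃ μ, H.HasEigenvalue μ ∧ H.HasEigenvalue (μ + n * c)} ⊆
        ⋃ μ ∈ setOf H.HasEigenvalue, ⋃ ν ∈ setOf H.HasEigenvalue,
          {n : ℕ | μ + n * c = ν} := by
      rintro n ⟨μ, h1, h2⟩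
      simp only [Set.mem_iUnion, Set.mem_setOf_eq]
      exact ⟨μ, h1, μ + n * c, h2, rfl⟩
    refine Set.Finite.subset ?_ hsub
    refine H.finite_hasEigenvalue.biUnion fun μ _ => H.finite_hasEigenvalue.biUnion
      fun ν _ => Set.Subsingleton.finite ?_
    intro a ha b hb
    simp only [Set.mem_setOf_eq] at ha hb
    have hab : (a : ℂ) * c = (b : ℂ) * c := by
      have := ha.trans hb.symm
      linear_combination this
    exact_mod_cast mul_right_cancel₀ hc hab
  obtain ⟨N, hN⟩ : ∃ N : ℕ, ¬ ∃ μ, H.HasEigenvalue μ ∧ H.HasEigenvalue (μ + N * c) := by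
    obtain ⟨N, hN⟩ := (Set.Finite.infinite_compl hbadfin).nonempty
    exact ⟨N, hN⟩
  refine ⟨N, ?_⟩
  have hker : ∀ μ : ℂ, H.maxGenEigenspace μ ≤ LinearMap.ker (X ^ N) := by
    intro μ v hv
    rcases eq_or_ne v 0 with rfl | hv0
    · simp
    have hμ : H.HasEigenvalue μ := by
      have hne : H.maxGenEigenspace μ ≠ ⊥ := by
        intro hbot
        exact hv0 (by simpa [hbot] using hv)
      exact Module.End.HasUnifEigenvalue.lt zero_lt_one hne
    have hmem := iter N μ v hv
    have hbot : H.maxGenEigenspace (μ + N * c) = ⊥ := by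
      by_contra hbot
      exact hN ⟨μ, hμ, Module.End.HasUnifEigenvalue.lt zero_lt_one hbot⟩
    rw [hbot] at hmem
    simpa [LinearMap.mem_ker] using hmem
  have htop := Module.End.iSup_maxGenEigenspace_eq_top H
  refine LinearMap.ker_eq_top.mp (eq_top_iff.mpr ?_)
  rw [← htop]
  exact iSup_le hker

private lemma MblkC_mul (A A' : Matrix (Fin 4) (Fin 4) ℂ) (b b' : Fin 4 → ℂ) :
    MblkC A b * MblkC A' b' = MblkC (A * A') (A.mulVec b') := by
  unfold MblkC
  rw [Matrix.fromBlocks_multiply]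
  simp only [Matrix.mul_zero, Matrix.zero_mul, add_zero, zero_add]
  congr 1

private lemma MblkC_sub (A A' : Matrix (Fin 4) (Fin 4) ℂ) (b b' : Fin 4 → ℂ) :
    MblkC A b - MblkC A' b' = MblkC (A - A') (b - b') := by
  ext (i | i) (j | j) <;> simp [MblkC]

private lemma MblkC_add (A A' : Matrix (Fin 4) (Fin 4) ℂ) (b b' : Fin 4 → ℂ) :
    MblkC A b + MblkC A' b' = MblkC (A + A') (b + b') := by
  ext (i | i) (j | j) <;> simp [MblkC]

private lemma MblkC_smul (c : ℂ) (A : Matrix (Fin 4) (Fin 4) ℂ) (b : Fin 4 → ℂ) :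
    c • MblkC A b = MblkC (c • A) (c • b) := by
  ext (i | i) (j | j) <;> simp [MblkC]

private lemma MblkC_zero : MblkC 0 0 = 0 := by
  unfold MblkC
  ext (i | i) (j | j) <;> simp

private lemma MblkC_lie (A : Matrix (Fin 4) (Fin 4) ℂ) (w : Fin 4 → ℂ) :
    ⁅MblkC A 0, MblkC 0 w⁆ = MblkC 0 (A.mulVec w) := by
  rw [Ring.lie_def, MblkC_mul, MblkC_mul, MblkC_sub]
  simp [Matrix.mulVec_zero]

private lemma MblkC_lie_trans (w w' : Fin 4 → ℂ) :
    ⁅MblkC 0 w, MblkC 0 w'⁆ = 0 := by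
  rw [Ring.lie_def, MblkC_mul, MblkC_mul, MblkC_sub]
  simpa [Matrix.zero_mulVec] using MblkC_zero

private lemma isLorentzC_zero : IsLorentzC 0 := by
  simp [IsLorentzC]

/-- The boost generator in the (0,1)-plane. -/
private def B1mat : Matrix (Fin 4) (Fin 4) ℂ :=
  !![0, 1, 0, 0; 1, 0, 0, 0; 0, 0, 0, 0; 0, 0, 0, 0]

/-- The rotation generator in the (2,3)-plane. -/
private def Rmat : Matrix (Fin 4) (Fin 4) ℂ :=
  !![0, 0, 0, 0; 0, 0, 0, 0; 0, 0, 0, -1; 0, 0, 1, 0]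

private lemma lorentz_entrywise (A : Matrix (Fin 4) (Fin 4) ℂ)
    (h : ∀ i j, A j i * ![(1:ℂ), -1, -1, -1] j + ![(1:ℂ), -1, -1, -1] i * A i j = 0) :
    IsLorentzC A := by
  show _ = _
  ext i j
  rw [Matrix.add_apply, Matrix.zero_apply, etaC, Matrix.mul_diagonal, Matrix.diagonal_mul,
    Matrix.transpose_apply]
  exact h i j

private lemma isLorentzC_B1 : IsLorentzC B1mat := by
  refine lorentz_entrywise _ fun i j => ?_
  fin_cases i <;> fin_cases j <;> norm_num [B1mat]

private lemma isLorentzC_R : IsLorentzC Rmat := by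
  refine lorentz_entrywise _ fun i j => ?_
  fin_cases i <;> fin_cases j <;> norm_num [Rmat]

end Aux

/-- Lemma 4.1, part 1: in every finite-dimensional complex Lie module `D` over the
complexified Poincaré algebra `p = iso(1,3,ℂ)` (given by a map `ρ` which is linear on
`p` and respects the bracket), each translation element `M(0,b)` acts as a nilpotent
endomorphism of `D`. -/
theorem translations_act_nilpotently
    {D : Type*} [AddCommGroup D] [Module ℂ D] [FiniteDimensional ℂ D]
    (ρ : Matrix (Fin 4 ⊕ Fin 1) (Fin 4 ⊕ Fin 1) ℂ → Module.End ℂ D)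
    (hadd : ∀ (A : Matrix (Fin 4) (Fin 4) ℂ) (b : Fin 4 → ℂ)
      (A' : Matrix (Fin 4) (Fin 4) ℂ) (b' : Fin 4 → ℂ),
      IsLorentzC A → IsLorentzC A' →
      ρ (MblkC A b + MblkC A' b') = ρ (MblkC A b) + ρ (MblkC A' b'))
    (hsmul : ∀ (c : ℂ) (A : Matrix (Fin 4) (Fin 4) ℂ) (b : Fin 4 → ℂ),
      IsLorentzC A → ρ (c • MblkC A b) = c • ρ (MblkC A b))
    (hbrk : ∀ (A : Matrix (Fin 4) (Fin 4) ℂ) (b : Fin 4 → ℂ)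
      (A' : Matrix (Fin 4) (Fin 4) ℂ) (b' : Fin 4 → ℂ),
      IsLorentzC A → IsLorentzC A' →
      ρ ⁅MblkC A b, MblkC A' b'⁆ = ⁅ρ (MblkC A b), ρ (MblkC A' b')⁆) :
    ∀ b : Fin 4 → ℂ, IsNilpotent (ρ (MblkC 0 b)) := by
  intro b
  have hL0 := isLorentzC_zero
  -- `ρ 0 = 0`
  have hρ0 : ρ 0 = 0 := by
    have h := hsmul 0 0 0 hL0
    rwa [zero_smul, zero_smul] at h
  -- linearity of `ρ` on translations
  have hTadd : ∀ x y : Fin 4 → ℂ, ρ (MblkC 0 (x + y)) = ρ (MblkC 0 x) + ρ (MblkC 0 y) := by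
    intro x y
    have h := hadd 0 x 0 y hL0 hL0
    rwa [MblkC_add, add_zero] at h
  have hTsmul : ∀ (c : ℂ) (x : Fin 4 → ℂ), ρ (MblkC 0 (c • x)) = c • ρ (MblkC 0 x) := by
    intro c x
    have h := hsmul c 0 x hL0
    rwa [MblkC_smul, smul_zero] at h
  -- translations commute
  have hcomm : ∀ x y : Fin 4 → ℂ, Commute (ρ (MblkC 0 x)) (ρ (MblkC 0 y)) := by
    intro x y
    have h := hbrk 0 x 0 y hL0 hL0
    rw [MblkC_lie_trans, hρ0, Ring.lie_def] at h
    exact sub_eq_zero.mp h.symm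
  -- eigen-translations act nilpotently
  have hnil : ∀ (A : Matrix (Fin 4) (Fin 4) ℂ) (w : Fin 4 → ℂ) (c : ℂ),
      IsLorentzC A → c ≠ 0 → A.mulVec w = c • w → IsNilpotent (ρ (MblkC 0 w)) := by
    intro A w c hA hc hw
    refine keyNilp (ρ (MblkC A 0)) _ c hc ?_
    have h := hbrk A 0 0 w hA hL0
    rw [MblkC_lie, hw, hTsmul, Ring.lie_def] at h
    exact h.symm
  -- the four null eigendirections
  set w1 : Fin 4 → ℂ := ![1, 1, 0, 0] with hw1def
  set w2 : Fin 4 → ℂ := ![1, -1, 0, 0] with hw2def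
  set w3 : Fin 4 → ℂ := ![0, 0, 1, Complex.I] with hw3def
  set w4 : Fin 4 → ℂ := ![0, 0, 1, -Complex.I] with hw4def
  have hw1 : B1mat.mulVec w1 = (1 : ℂ) • w1 := by
    funext i
    fin_cases i <;>
      norm_num [B1mat, hw1def, Matrix.mulVec, dotProduct, Fin.sum_univ_four, Matrix.cons_val_two, Matrix.cons_val_three,
          Matrix.vecHead, Matrix.vecTail]
  have hw2 : B1mat.mulVec w2 = (-1 : ℂ) • w2 := by
    funext i
    fin_cases i <;>
      norm_num [B1mat, hw2def, Matrix.mulVec, dotProduct, Fin.sum_univ_four, Matrix.cons_val_two, Matrix.cons_val_three,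
          Matrix.vecHead, Matrix.vecTail]
  have hw3 : Rmat.mulVec w3 = (-Complex.I) • w3 := by
    funext i
    fin_cases i <;>
      norm_num [Rmat, hw3def, Matrix.mulVec, dotProduct, Fin.sum_univ_four, Matrix.cons_val_two, Matrix.cons_val_three,
          Matrix.vecHead, Matrix.vecTail,
        Complex.I_mul_I]
  have hw4 : Rmat.mulVec w4 = Complex.I • w4 := by
    funext i
    fin_cases i <;>
      norm_num [Rmat, hw4def, Matrix.mulVec, dotProduct, Fin.sum_univ_four, Matrix.cons_val_two, Matrix.cons_val_three,
          Matrix.vecHead, Matrix.vecTail,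
        Complex.I_mul_I]
  have n1 : IsNilpotent (ρ (MblkC 0 w1)) := hnil B1mat w1 1 isLorentzC_B1 one_ne_zero hw1
  have n2 : IsNilpotent (ρ (MblkC 0 w2)) :=
    hnil B1mat w2 (-1) isLorentzC_B1 (by norm_num) hw2
  have n3 : IsNilpotent (ρ (MblkC 0 w3)) :=
    hnil Rmat w3 (-Complex.I) isLorentzC_R (by simp [Complex.I_ne_zero]) hw3
  have n4 : IsNilpotent (ρ (MblkC 0 w4)) :=
    hnil Rmat w4 Complex.I isLorentzC_R Complex.I_ne_zero hw4
  -- decompose `b`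
  set c1 : ℂ := (b 0 + b 1) / 2
  set c2 : ℂ := (b 0 - b 1) / 2
  set c3 : ℂ := (b 2 - Complex.I * b 3) / 2
  set c4 : ℂ := (b 2 + Complex.I * b 3) / 2
  have hbdec : b = c1 • w1 + (c2 • w2 + (c3 • w3 + c4 • w4)) := by
    funext i
    fin_cases i <;> simp [hw1def, hw2def, hw3def, hw4def, c1, c2, c3, c4] <;>
      field_simp <;> ring_nf <;> simp [Complex.I_sq] <;> ring_nf
  rw [hbdec, hTadd, hTadd, hTadd, hTsmul, hTsmul, hTsmul, hTsmul]
  -- sum of commuting nilpotents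
  have comm_smul : ∀ (a d : ℂ) (x y : Fin 4 → ℂ),
      Commute (a • ρ (MblkC 0 x)) (d • ρ (MblkC 0 y)) := fun a d x y =>
    ((hcomm x y).smul_left a).smul_right d
  refine Commute.isNilpotent_add ?_ (n1.smul c1) ?_
  · exact ((comm_smul c1 c2 w1 w2).add_right ((comm_smul c1 c3 w1 w3).add_right
      (comm_smul c1 c4 w1 w4)))
  refine Commute.isNilpotent_add ?_ (n2.smul c2) ?_
  · exact (comm_smul c2 c3 w2 w3).add_right (comm_smul c2 c4 w2 w4)
  exact Commute.isNilpotent_add (comm_smul c3 c4 w3 w4) (n3.smul c3) (n4.smul c4)
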